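/- Let G be a finite simple graph, let k ≥ 1, and let I_0 and I_r be independent sets of G with |I_0| = |I_r| = k. Suppose I* is an independent set of G with |I*| ≥ k such that I* ∩ N_G[I_0 ∪ I_r] = ∅ (no vertex of I* lies in or is adjacent to a vertex of I_0 ∪ I_r). Then there exists a token-jumping reconfiguration sequence from I_0 to I_r of length at most 2k in which every independent set of the sequence is contained in I_0 ∪ I_r ∪ I*. -/

import Mathlib

/-- `I` is an independent set of `G` (as a finset of vertices). -/
def IsIndepFinset {V : Type*} (G : SimpleGraph V) (I : Finset V) : Prop :=
  ∀ u ∈ I, ∀ v ∈ I, ¬ G.Adj u v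

/-- One token jump: exactly one token moves from `u ∈ I` to `v ∉ I`. -/
def TJStep {V : Type*} [DecidableEq V] (I J : Finset V) : Prop :=
  ∃ u v, u ∈ I ∧ v ∉ I ∧ I \ J = {u} ∧ J \ I = {v}

/-- `f 0, f 1, …, f ℓ` is a token-jumping reconfiguration sequence from `I` to `J`
in `G`, all of whose members are independent sets of cardinality `k`. -/
def TJSeq {V : Type*} [DecidableEq V] (G : SimpleGraph V) (k : ℕ)
    (I J : Finset V) (ℓ : ℕ) (f : ℕ → Finset V) : Prop :=
  f 0 = I ∧ f ℓ = J ∧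
  (∀ i ≤ ℓ, IsIndepFinset G (f i) ∧ (f i).card = k) ∧
  (∀ i < ℓ, TJStep (f i) (f (i + 1)))

/-- There is a token-jumping reconfiguration sequence from `I` to `J` in `G`. -/
def TJReachable {V : Type*} [DecidableEq V] (G : SimpleGraph V) (k : ℕ)
    (I J : Finset V) : Prop :=
  ∃ ℓ f, TJSeq G k I J ℓ f

/-- There is a token-jumping reconfiguration sequence from `I` to `J` in the
subgraph of `G` induced on the vertex set `W` (equivalently: a sequence in `G`
all of whose members are contained in `W`). -/
def TJReachableWithin {V : Type*} [DecidableEq V] (G : SimpleGraph V) (k : ℕ)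
    (I J : Finset V) (W : Finset V) : Prop :=
  ∃ ℓ f, TJSeq G k I J ℓ f ∧ ∀ i ≤ ℓ, f i ⊆ W

/-- `G` contains the complete bipartite graph `K_{p,q}` as a subgraph. -/
def ContainsKpq {V : Type*} (G : SimpleGraph V) (p q : ℕ) : Prop :=
  ∃ X Y : Finset V, Disjoint X Y ∧ X.card = p ∧ Y.card = q ∧
    ∀ x ∈ X, ∀ y ∈ Y, G.Adj x y

/-- an independent "buffer" `I*` of size ≥ k avoiding the closed
neighborhood of `I₀ ∪ Iᵣ` yields a reconfiguration sequence of length at most `2k`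
staying inside `I₀ ∪ Iᵣ ∪ I*`. -/
lemma indep_subset {V : Type*} (G : SimpleGraph V) {A B : Finset V}
    (h : IsIndepFinset G B) (hs : A ⊆ B) : IsIndepFinset G A :=
  fun u hu v hv => h u (hs hu) v (hs hv)

lemma swap_seq {V : Type*} [DecidableEq V] (G : SimpleGraph V) (k : ℕ)
    (A B : Finset V) (hd : Disjoint A B) (hA : A.card = k) (hB : B.card = k)
    (hind : IsIndepFinset G (A ∪ B)) :
    ∃ f : ℕ → Finset V, TJSeq G k A B k f ∧ ∀ i ≤ k, f i ⊆ A ∪ B := by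
  classical
  set lA := A.toList with hlA
  set lB := B.toList with hlB
  have hnA : lA.Nodup := A.nodup_toList
  have hnB : lB.Nodup := B.nodup_toList
  have hlenA : lA.length = k := by rw [hlA, Finset.length_toList, hA]
  have hlenB : lB.length = k := by rw [hlB, Finset.length_toList, hB]
  have hAset : lA.toFinset = A := Finset.toList_toFinset A
  have hBset : lB.toFinset = B := Finset.toList_toFinset B
  set f : ℕ → Finset V := fun i => (lA.drop i).toFinset ∪ (lB.take i).toFinset with hf
  have hsubA : ∀ i, (lA.drop i).toFinset ⊆ A := by
    intro i x hx
    rw [← hAset]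
    exact List.mem_toFinset.mpr (List.mem_of_mem_drop (List.mem_toFinset.mp hx))
  have hsubB : ∀ i, (lB.take i).toFinset ⊆ B := by
    intro i x hx
    rw [← hBset]
    exact List.mem_toFinset.mpr (List.mem_of_mem_take (List.mem_toFinset.mp hx))
  have hsub : ∀ i, f i ⊆ A ∪ B := by
    intro i
    exact Finset.union_subset ((hsubA i).trans Finset.subset_union_left)
      ((hsubB i).trans Finset.subset_union_right)
  have hcard : ∀ i ≤ k, (f i).card = k := by
    intro i hi
    have hdis : Disjoint (lA.drop i).toFinset (lB.take i).toFinset :=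
      Finset.disjoint_of_subset_left (hsubA i) (Finset.disjoint_of_subset_right (hsubB i) hd)
    rw [hf]
    rw [Finset.card_union_of_disjoint hdis,
      List.toFinset_card_of_nodup (hnA.sublist (List.drop_sublist i lA)),
      List.toFinset_card_of_nodup (hnB.sublist (List.take_sublist i lB)),
      List.length_drop, List.length_take, hlenA, hlenB]
    omega
  refine ⟨f, ⟨?_, ?_, fun i hi => ⟨indep_subset G hind (hsub i), hcard i hi⟩, ?_⟩,
    fun i _ => hsub i⟩
  · simp [hf, hAset]
  · rw [hf]
    simp [List.drop_eq_nil_of_le (le_of_eq hlenA), List.take_of_length_le (le_of_eq hlenB), hBset]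
  · intro i hik
    have hiA : i < lA.length := by omega
    have hiB : i < lB.length := by omega
    set a := lA[i] with ha
    set b := lB[i] with hb
    have hdrop : lA.drop i = a :: lA.drop (i + 1) := List.drop_eq_getElem_cons hiA
    have htake : lB.take (i + 1) = lB.take i ++ [b] := (List.take_concat_get' lB i hiB).symm
    have haA : a ∈ A := by rw [← hAset]; exact List.mem_toFinset.mpr (List.getElem_mem hiA)
    have hbB : b ∈ B := by rw [← hBset]; exact List.mem_toFinset.mpr (List.getElem_mem hiB)
    have haB : a ∉ B := fun h => (Finset.disjoint_left.mp hd haA) h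
    have hbA : b ∉ A := fun h => (Finset.disjoint_left.mp hd h) hbB
    have hadrop : a ∉ lA.drop (i + 1) := by
      have : (lA.drop i).Nodup := hnA.sublist (List.drop_sublist i lA)
      rw [hdrop] at this
      exact (List.nodup_cons.mp this).1
    have hbtake : b ∉ lB.take i := by
      have : (lB.take (i + 1)).Nodup := hnB.sublist (List.take_sublist (i + 1) lB)
      rw [htake] at this
      have := List.disjoint_of_nodup_append this
      intro h
      exact this h (List.mem_singleton_self b)
    have hne : a ≠ b := fun h => haB (h ▸ hbB)
    have hmemi : ∀ x, x ∈ f i ↔ (x = a ∨ x ∈ lA.drop (i + 1) ∨ x ∈ lB.take i) := by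
      intro x
      rw [hf]
      simp [hdrop, or_assoc]
    have hmemi1 : ∀ x, x ∈ f (i + 1) ↔ (x ∈ lA.drop (i + 1) ∨ x ∈ lB.take i ∨ x = b) := by
      intro x
      rw [hf]
      simp [htake, or_assoc]
      tauto
    have hdropA : ∀ x, x ∈ lA.drop (i+1) → x ∈ A := by
      intro x hx; rw [← hAset]; exact List.mem_toFinset.mpr (List.mem_of_mem_drop hx)
    have htakeB : ∀ x, x ∈ lB.take i → x ∈ B := by
      intro x hx; rw [← hBset]; exact List.mem_toFinset.mpr (List.mem_of_mem_take hx)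
    refine ⟨a, b, (hmemi a).mpr (Or.inl rfl), ?_, ?_, ?_⟩
    · rw [hmemi b]
      push_neg
      exact ⟨hne.symm, fun h => hbA (hdropA b h), hbtake⟩
    · ext x
      simp only [Finset.mem_sdiff, hmemi x, hmemi1 x, Finset.mem_singleton]
      constructor
      · rintro ⟨h1 | h1 | h1, h2⟩
        · exact h1
        · exact absurd (Or.inl h1) h2
        · exact absurd (Or.inr (Or.inl h1)) h2
      · rintro rfl
        push_neg
        exact ⟨Or.inl rfl, hadrop, fun h => haB (htakeB a h), hne⟩
    · ext x
      simp only [Finset.mem_sdiff, hmemi x, hmemi1 x, Finset.mem_singleton]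
      constructor
      · rintro ⟨h1 | h1 | h1, h2⟩
        · exact absurd (Or.inr (Or.inl h1)) h2
        · exact absurd (Or.inr (Or.inr h1)) h2
        · exact h1
      · rintro rfl
        push_neg
        exact ⟨Or.inr (Or.inr rfl), hne.symm, fun h => hbA (hdropA b h), hbtake⟩


theorem buffer_gives_short_sequence {V : Type*} [Fintype V] [DecidableEq V]
    (G : SimpleGraph V) (k : ℕ) (hk : 1 ≤ k) (I0 Ir Istar : Finset V)
    (hI0 : IsIndepFinset G I0) (hIr : IsIndepFinset G Ir)
    (hI0k : I0.card = k) (hIrk : Ir.card = k)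
    (hstar : IsIndepFinset G Istar) (hstark : k ≤ Istar.card)
    (havoid : ∀ v ∈ Istar, v ∉ I0 ∪ Ir ∧ ∀ u ∈ I0 ∪ Ir, ¬ G.Adj u v) :
    ∃ ℓ ≤ 2 * k, ∃ f : ℕ → Finset V,
      TJSeq G k I0 Ir ℓ f ∧ ∀ i ≤ ℓ, f i ⊆ I0 ∪ Ir ∪ Istar := by
  classical
  obtain ⟨S, hSsub, hSk⟩ := Finset.exists_subset_card_eq hstark
  have hSI0 : Disjoint I0 S := by
    rw [Finset.disjoint_right]
    intro v hv hv0
    exact (havoid v (hSsub hv)).1 (Finset.mem_union_left _ hv0)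
  have hSIr : Disjoint S Ir := by
    rw [Finset.disjoint_left]
    intro v hv hv0
    exact (havoid v (hSsub hv)).1 (Finset.mem_union_right _ hv0)
  have hindS : IsIndepFinset G S := indep_subset G hstar hSsub
  have hind1 : IsIndepFinset G (I0 ∪ S) := by
    intro u hu v hv
    rcases Finset.mem_union.mp hu with hu | hu <;> rcases Finset.mem_union.mp hv with hv | hv
    · exact hI0 u hu v hv
    · exact (havoid v (hSsub hv)).2 u (Finset.mem_union_left _ hu)
    · intro h
      exact (havoid u (hSsub hu)).2 v (Finset.mem_union_left _ hv) h.symm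
    · exact hindS u hu v hv
  have hind2 : IsIndepFinset G (S ∪ Ir) := by
    intro u hu v hv
    rcases Finset.mem_union.mp hu with hu | hu <;> rcases Finset.mem_union.mp hv with hv | hv
    · exact hindS u hu v hv
    · intro h
      exact (havoid u (hSsub hu)).2 v (Finset.mem_union_right _ hv) h.symm
    · exact (havoid v (hSsub hv)).2 u (Finset.mem_union_right _ hu)
    · exact hIr u hu v hv
  obtain ⟨f, ⟨hf0, hfk, hfic, hfstep⟩, hfsub⟩ := swap_seq G k I0 S hSI0 hI0k hSk hind1
  obtain ⟨g, ⟨hg0, hgk, hgic, hgstep⟩, hgsub⟩ := swap_seq G k S Ir hSIr hSk hIrk hind2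
  set h : ℕ → Finset V := fun i => if i < k then f i else g (i - k) with hh
  have hW1 : I0 ∪ S ⊆ I0 ∪ Ir ∪ Istar := by
    intro x hx
    rcases Finset.mem_union.mp hx with hx | hx
    · exact Finset.mem_union_left _ (Finset.mem_union_left _ hx)
    · exact Finset.mem_union_right _ (hSsub hx)
  have hW2 : S ∪ Ir ⊆ I0 ∪ Ir ∪ Istar := by
    intro x hx
    rcases Finset.mem_union.mp hx with hx | hx
    · exact Finset.mem_union_right _ (hSsub hx)
    · exact Finset.mem_union_left _ (Finset.mem_union_right _ hx)
  refine ⟨2 * k, le_refl _, h, ⟨?_, ?_, ?_, ?_⟩, ?_⟩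
  · rw [hh]
    simp only [if_pos (by omega : 0 < k)]
    exact hf0
  · rw [hh]
    simp only [if_neg (by omega : ¬ 2 * k < k)]
    rw [(by omega : 2 * k - k = k)]
    exact hgk
  · intro i hi
    rw [hh]
    by_cases hik : i < k
    · simp only [if_pos hik]
      exact hfic i (le_of_lt hik)
    · simp only [if_neg hik]
      exact hgic (i - k) (by omega)
  · intro i hi
    rw [hh]
    by_cases hik : i < k
    · simp only [if_pos hik]
      by_cases hik1 : i + 1 < k
      · simp only [if_pos hik1]
        exact hfstep i hik
      · simp only [if_neg hik1]
        have : i + 1 = k := by omega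
        rw [this, (by omega : k - k = 0), hg0, ← hfk, ← this]
        exact hfstep i hik
    · simp only [if_neg hik, if_neg (by omega : ¬ i + 1 < k),
        (by omega : i + 1 - k = i - k + 1)]
      exact hgstep (i - k) (by omega)
  · intro i hi
    rw [hh]
    by_cases hik : i < k
    · simp only [if_pos hik]
      exact (hfsub i (le_of_lt hik)).trans hW1
    · simp only [if_neg hik]
      exact (hgsub (i - k) (by omega)).trans hW2
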